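/- Let V be a directed graph in which ⊥ is an equivalence relation and which satisfies the parity condition. For any two distinct columns P and Q, the relation ∼_Q on P defined by x∼_Q x' iff (for all y∈Q, x→y ↔ x'→y) is an equivalence relation on P with at most two equivalence classes. -/

import Mathlib

/-- `x ⊥ y`: there is no edge between `x` and `y`. -/
def Perp {V : Type*} (E : V → V → Prop) (x y : V) : Prop := ¬ E x y ∧ ¬ E y x

/-- A directed graph: an irreflexive relation such that `x → y` and `y → x` never both hold. -/
def IsDigraph {V : Type*} (E : V → V → Prop) : Prop :=
  (∀ x, ¬ E x x) ∧ ∀ x y, E x y → ¬ E y x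

open Classical in
/-- The parity condition: for `x1 ≠ x2` in a common column and `y1 ≠ y2` in a common
column, the number of pairs `(i,j)` with `x_i → y_j` is even. -/
def ParityCond {V : Type*} (E : V → V → Prop) : Prop :=
  ∀ x1 x2 y1 y2 : V, x1 ≠ x2 → y1 ≠ y2 → Perp E x1 x2 → Perp E y1 y2 →
    Even ((if E x1 y1 then 1 else 0) + (if E x1 y2 then 1 else 0) +
      (if E x2 y1 then 1 else 0) + (if E x2 y2 then 1 else 0))

/-- Membership in the class `𝒮`: a digraph in which `⊥` is an equivalence relation and
the parity condition holds. -/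
def InClassS {V : Type*} (E : V → V → Prop) : Prop :=
  IsDigraph E ∧ Equivalence (Perp E) ∧ ParityCond E

/-- `x ∼_Q x'` where `Q` is the column of `q`: `x` and `x'` have the same out-edges
towards every element of the column of `q`. -/
def SimCol {V : Type*} (E : V → V → Prop) (q : V) (x x' : V) : Prop :=
  ∀ y, Perp E y q → (E x y ↔ E x' y)

/-- for distinct columns `P` (the column of `p`) and `Q` (the column of `q`),
the relation `∼_Q` is an equivalence relation on `P` with at most two equivalence classes
(among any three elements of `P`, two are `∼_Q`-equivalent). -/
theorem simCol_equivalence_two_classes {V : Type*} (E : V → V → Prop)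
    (hD : IsDigraph E) (hEq : Equivalence (Perp E)) (hPar : ParityCond E)
    (p q : V) (hpq : ¬ Perp E p q) :
    (∀ x, Perp E x p → SimCol E q x x) ∧
    (∀ x x', Perp E x p → Perp E x' p → SimCol E q x x' → SimCol E q x' x) ∧
    (∀ x x' x'', Perp E x p → Perp E x' p → Perp E x'' p →
      SimCol E q x x' → SimCol E q x' x'' → SimCol E q x x'') ∧
    (∀ x x' x'', Perp E x p → Perp E x' p → Perp E x'' p →
      SimCol E q x x' ∨ SimCol E q x x'' ∨ SimCol E q x' x'') := by
  -- Key lemma: for x ≠ x' in a common column, the "difference" at y ∈ Q is constant.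
  have key : ∀ x x' : V, x ≠ x' → Perp E x x' → ∀ y y', Perp E y q → Perp E y' q →
      ((E x y ↔ E x' y) ↔ (E x y' ↔ E x' y')) := by
    intro x x' hne hperp y y' hy hy'
    by_cases hyy' : y = y'
    · subst hyy'; rfl
    · have hyp : Perp E y y' := hEq.trans hy (hEq.symm hy')
      have h := hPar x x' y y' hne hyy' hperp hyp
      by_cases h1 : E x y <;> by_cases h2 : E x y' <;>
        by_cases h3 : E x' y <;> by_cases h4 : E x' y' <;>
        simp_all [Nat.even_iff]
  refine ⟨fun x _ y _ => Iff.rfl,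
    fun x x' _ _ h y hy => (h y hy).symm,
    fun x x' x'' _ _ _ h h' y hy => (h y hy).trans (h' y hy), ?_⟩
  intro x x' x'' hx hx' hx''
  by_cases h1 : SimCol E q x x'
  · exact Or.inl h1
  by_cases h2 : SimCol E q x x''
  · exact Or.inr (Or.inl h2)
  refine Or.inr (Or.inr ?_)
  have hne1 : x ≠ x' := by rintro rfl; exact h1 (fun y _ => Iff.rfl)
  have hne2 : x ≠ x'' := by rintro rfl; exact h2 (fun y _ => Iff.rfl)
  have hp1 : Perp E x x' := hEq.trans hx (hEq.symm hx')
  have hp2 : Perp E x x'' := hEq.trans hx (hEq.symm hx'')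
  obtain ⟨y1, hy1, hd1⟩ : ∃ y, Perp E y q ∧ ¬(E x y ↔ E x' y) := by
    simpa [SimCol, not_forall] using h1
  obtain ⟨y2, hy2, hd2⟩ : ∃ y, Perp E y q ∧ ¬(E x y ↔ E x'' y) := by
    simpa [SimCol, not_forall] using h2
  intro y hy
  have d1 : ¬(E x y ↔ E x' y) := fun h => hd1 ((key x x' hne1 hp1 y y1 hy hy1).mp h)
  have d2 : ¬(E x y ↔ E x'' y) := fun h => hd2 ((key x x'' hne2 hp2 y y2 hy hy2).mp h)
  tauto
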